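/- arXiv:1803.05682 — 2 statements merged into one kernel-verified Lean document; each statement's English description precedes it below -/
import Mathlib

section
/- Under (C0'), (C1'), (C2') (step generating function R finite near D = {α : R(α) ≤ 1} and nonzero mean), for every α ∈ D and all sequences (u_n), (v_n) in E with u_n/n → u and v_n/n → v, one has limsup_{n→∞} (1/n) log G(u_n, v_n) ≤ −⟨α, v − u⟩, where G is the Green function of the random walk killed on exiting the cone. -/
open scoped ENNReal Classical BigOperators
open Filter

noncomputable section

namespace RW

variable {G : Type*}

/-- n-step transition kernel. -/
def kiter (p : G → G → ℝ≥0∞) : ℕ → G → G → ℝ≥0∞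
  | 0 => fun x y => if x = y then 1 else 0
  | n + 1 => fun x y => ∑' z, p x z * kiter p n z y

/-- Green function `G(x,y) = Σ_t ℙ_x(X(t)=y)`. -/
def green (p : G → G → ℝ≥0∞) (x y : G) : ℝ≥0∞ := ∑' n, kiter p n x y

end RW

namespace RW

/-- Euclidean norm on `Fin d → ℝ`. -/
def rnorm {d : ℕ} (x : Fin d → ℝ) : ℝ := Real.sqrt (∑ i, (x i) ^ 2)

/-- Embedding of the lattice `ℤ^d` into `ℝ^d`. -/
def toR {d : ℕ} (x : Fin d → ℤ) : Fin d → ℝ := fun i => (x i : ℝ)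

/-- Jump generating function `R(α) = Σ_x μ(x) e^{⟨α,x⟩}`. -/
def Rgen {d : ℕ} (μ : (Fin d → ℤ) → ℝ≥0∞) (α : Fin d → ℝ) : ℝ≥0∞ :=
  ∑' x : Fin d → ℤ, μ x * ENNReal.ofReal (Real.exp (∑ i, α i * (x i : ℝ)))

end RW

end

noncomputable section
namespace RW

-- exponential weight
def phi {d : ℕ} (β : Fin d → ℝ) (x : Fin d → ℤ) : ℝ≥0∞ :=
  ENNReal.ofReal (Real.exp (∑ i, β i * (x i : ℝ)))

variable {d : ℕ}

lemma phi_pos (β : Fin d → ℝ) (x : Fin d → ℤ) : 0 < phi β x :=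
  ENNReal.ofReal_pos.2 (Real.exp_pos _)

lemma phi_ne_top (β : Fin d → ℝ) (x : Fin d → ℤ) : phi β x ≠ ⊤ := ENNReal.ofReal_ne_top

lemma phi_zero (β : Fin d → ℝ) : phi β 0 = 1 := by
  simp [phi]

lemma phi_add (β : Fin d → ℝ) (a b : Fin d → ℤ) : phi β (a + b) = phi β a * phi β b := by
  unfold phi
  rw [← ENNReal.ofReal_mul (Real.exp_nonneg _), ← Real.exp_add]
  congr 1
  rw [← Finset.sum_add_distrib]
  apply congrArg
  apply Finset.sum_congr rfl
  intro i _
  have : ((a + b) i : ℝ) = (a i : ℝ) + (b i : ℝ) := by push_cast [Pi.add_apply]; ring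
  rw [this]; ring

lemma Rgen_eq (μ : (Fin d → ℤ) → ℝ≥0∞) (β : Fin d → ℝ) :
    Rgen μ β = ∑' x, μ x * phi β x := rfl

lemma kiter_le (μ : (Fin d → ℤ) → ℝ≥0∞) (p : (Fin d → ℤ) → (Fin d → ℤ) → ℝ≥0∞)
    (hp : ∀ x y, p x y ≤ μ (y - x)) (β : Fin d → ℝ) :
    ∀ (n : ℕ) (x y : Fin d → ℤ), kiter p n x y ≤ (Rgen μ β) ^ n * phi β (x - y) := by
  intro n
  induction n with
  | zero =>
    intro x y
    by_cases h : x = y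
    · subst h; simp [kiter, phi_zero]
    · simp [kiter, h]
  | succ n ih =>
    intro x y
    have step : ∀ z, p x z * kiter p n z y ≤
        μ (z - x) * ((Rgen μ β) ^ n * (phi β (z - x) * phi β (x - y))) := by
      intro z
      have h1 : phi β (z - y) = phi β (z - x) * phi β (x - y) := by
        rw [← phi_add]; congr 1; abel
      calc p x z * kiter p n z y ≤ μ (z - x) * ((Rgen μ β) ^ n * phi β (z - y)) :=
            mul_le_mul' (hp x z) (ih z y)
        _ = μ (z - x) * ((Rgen μ β) ^ n * (phi β (z - x) * phi β (x - y))) := by rw [h1]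
    calc kiter p (n+1) x y = ∑' z, p x z * kiter p n z y := rfl
      _ ≤ ∑' z, μ (z - x) * ((Rgen μ β) ^ n * (phi β (z - x) * phi β (x - y))) :=
          ENNReal.tsum_le_tsum step
      _ = ((Rgen μ β) ^ n * phi β (x - y)) * ∑' z, μ (z - x) * phi β (z - x) := by
          rw [← ENNReal.tsum_mul_left]; apply tsum_congr; intro z; ring
      _ = ((Rgen μ β) ^ n * phi β (x - y)) * Rgen μ β := by
          congr 1
          rw [Rgen_eq]
          exact ((Equiv.addRight x).tsum_eq (fun z => μ (z - x) * phi β (z - x))).symm.trans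
            (by apply tsum_congr; intro z; simp)
      _ = (Rgen μ β) ^ (n+1) * phi β (x - y) := by ring

lemma green_le (μ : (Fin d → ℤ) → ℝ≥0∞) (p : (Fin d → ℤ) → (Fin d → ℤ) → ℝ≥0∞)
    (hp : ∀ x y, p x y ≤ μ (y - x)) (β : Fin d → ℝ) (x y : Fin d → ℤ) :
    green p x y ≤ (1 - Rgen μ β)⁻¹ * phi β (x - y) := by
  calc green p x y ≤ ∑' n : ℕ, (Rgen μ β) ^ n * phi β (x - y) :=
        ENNReal.tsum_le_tsum (fun n => kiter_le μ p hp β n x y)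
    _ = (∑' n : ℕ, (Rgen μ β) ^ n) * phi β (x - y) := ENNReal.tsum_mul_right
    _ = (1 - Rgen μ β)⁻¹ * phi β (x - y) := by rw [ENNReal.tsum_geometric]

lemma prod_le_kiter (p : (Fin d → ℤ) → (Fin d → ℤ) → ℝ≥0∞) :
    ∀ (m : ℕ) (f : ℕ → Fin d → ℤ),
      (∏ j ∈ Finset.range m, p (f j) (f (j+1))) ≤ kiter p m (f 0) (f m) := by
  intro m
  induction m with
  | zero => intro f; simp [kiter]
  | succ m ih =>
    intro f
    have h1 : (∏ j ∈ Finset.range (m+1), p (f j) (f (j+1)))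
        = (∏ j ∈ Finset.range m, p (f (j+1)) (f (j+2))) * p (f 0) (f 1) :=
      Finset.prod_range_succ' (fun j => p (f j) (f (j+1))) m
    have h2 := ih (fun j => f (j+1))
    calc (∏ j ∈ Finset.range (m+1), p (f j) (f (j+1)))
        = p (f 0) (f 1) * ∏ j ∈ Finset.range m, p (f (j+1)) (f (j+2)) := by rw [h1]; ring
      _ ≤ p (f 0) (f 1) * kiter p m (f 1) (f (m+1)) := mul_le_mul_right h2 _
      _ ≤ ∑' z, p (f 0) z * kiter p m z (f (m+1)) := ENNReal.le_tsum (f 1)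
      _ = kiter p (m+1) (f 0) (f (m+1)) := rfl

lemma le_green (p : (Fin d → ℤ) → (Fin d → ℤ) → ℝ≥0∞) (m : ℕ) (x y : Fin d → ℤ) :
    kiter p m x y ≤ green p x y := ENNReal.le_tsum m


lemma exp_abs_le (a : ℝ) : Real.exp |a| ≤ Real.exp a + Real.exp (-a) := by
  rcases abs_cases a with ⟨h, _⟩ | ⟨h, _⟩ <;> rw [h] <;>
    [linarith [Real.exp_pos (-a)]; linarith [Real.exp_pos a]]

lemma exp_le_quadratic (s : ℝ) : Real.exp s ≤ 1 + s + s ^ 2 * Real.exp |s| := by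
  rcases le_or_gt |s| 1 with h | h
  · have h1 := Real.abs_exp_sub_one_sub_id_le h
    have h2 : (1:ℝ) ≤ Real.exp |s| := Real.one_le_exp (abs_nonneg s)
    have h3 : 0 ≤ s ^ 2 := sq_nonneg s
    have h4 : Real.exp s - 1 - s ≤ s ^ 2 := (abs_le.1 h1).2
    nlinarith
  · rcases le_or_gt 0 s with hs | hs
    · have h0 : |s| = s := abs_of_nonneg hs
      have h2 : (1:ℝ) ≤ s ^ 2 := by nlinarith [abs_nonneg s, h0 ▸ h]
      have h3 : (0:ℝ) < Real.exp s := Real.exp_pos s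
      rw [h0]; nlinarith
    · have h0 : |s| = -s := abs_of_neg hs
      have h2 : (1:ℝ) ≤ s ^ 2 := by nlinarith [h0 ▸ h]
      have h3 : Real.exp s ≤ 1 := Real.exp_le_one_iff.2 hs.le
      have h4 : (1:ℝ) ≤ Real.exp |s| := Real.one_le_exp (abs_nonneg s)
      nlinarith

lemma sq_le_exp_abs {ε : ℝ} (hε : 0 < ε) (s : ℝ) :
    s ^ 2 ≤ 4 / ε ^ 2 * Real.exp (ε * |s|) := by
  have h1 := Real.add_one_le_exp (ε * |s| / 2)
  have h2 : Real.exp (ε * |s| / 2) ^ 2 = Real.exp (ε * |s|) := by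
    rw [sq, ← Real.exp_add]; ring_nf
  have h3 : 0 ≤ ε * |s| / 2 := by positivity
  have h4 : (ε * |s| / 2 + 1) ^ 2 ≤ Real.exp (ε * |s|) := by
    rw [← h2]; apply pow_le_pow_left₀ (by positivity) h1
  have h5 : (ε * |s|) ^ 2 / 4 ≤ (ε * |s| / 2 + 1) ^ 2 := by nlinarith
  have h6 : ε ^ 2 * s ^ 2 = (ε * |s|) ^ 2 := by
    rw [mul_pow, sq_abs]
  rw [div_mul_eq_mul_div, le_div_iff₀ (by positivity : (0:ℝ) < ε ^ 2)]
  nlinarith [Real.exp_pos (ε * |s|)]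

/-- The key summability/representation fact. -/
lemma Rgen_repr (μ : (Fin d → ℤ) → ℝ≥0∞) (hμ : (∑' z, μ z) = 1) (γ : Fin d → ℝ)
    (hfin : Rgen μ γ < ⊤) :
    Summable (fun x : Fin d → ℤ => (μ x).toReal * Real.exp (∑ i, γ i * (x i : ℝ))) ∧
    Rgen μ γ = ENNReal.ofReal
      (∑' x : Fin d → ℤ, (μ x).toReal * Real.exp (∑ i, γ i * (x i : ℝ))) := by
  have hxt : ∀ x, μ x ≠ ⊤ := by
    intro x
    exact ne_top_of_le_ne_top (by simp [hμ]) (ENNReal.le_tsum x)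
  have hkey : ∀ x : Fin d → ℤ, μ x * ENNReal.ofReal (Real.exp (∑ i, γ i * (x i : ℝ)))
      = ENNReal.ofReal ((μ x).toReal * Real.exp (∑ i, γ i * (x i : ℝ))) := by
    intro x
    rw [ENNReal.ofReal_mul ENNReal.toReal_nonneg, ENNReal.ofReal_toReal (hxt x)]
  have hsum : Summable (fun x : Fin d → ℤ => (μ x).toReal * Real.exp (∑ i, γ i * (x i : ℝ))) := by
    have h1 : (∑' x, μ x * ENNReal.ofReal (Real.exp (∑ i, γ i * (x i : ℝ)))) ≠ ⊤ := hfin.ne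
    have h2 := ENNReal.summable_toReal h1
    refine h2.congr fun x => ?_
    rw [hkey x, ENNReal.toReal_ofReal (by positivity)]
  constructor
  · exact hsum
  · rw [ENNReal.ofReal_tsum_of_nonneg (fun x => by positivity) hsum]
    exact tsum_congr hkey

lemma exists_Rgen_lt_one (μ : (Fin d → ℤ) → ℝ≥0∞) (hμ : (∑' z, μ z) = 1)
    (δ : ℝ) (hδ : 0 < δ)
    (hfin : ∀ γ : Fin d → ℝ, ‖γ‖ < δ → Rgen μ γ < ⊤)
    (hm : (fun i => ∑' x : Fin d → ℤ, (μ x).toReal * (x i : ℝ)) ≠ (0 : Fin d → ℝ)) :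
    ∃ β : Fin d → ℝ, Rgen μ β < 1 := by
  set g : (Fin d → ℤ) → ℝ := fun x => (μ x).toReal with hg
  set m : Fin d → ℝ := fun i => ∑' x : Fin d → ℤ, g x * (x i : ℝ) with hmdef
  set c : (Fin d → ℤ) → ℝ := fun x => ∑ i, m i * (x i : ℝ) with hc
  have hgnn : ∀ x, 0 ≤ g x := fun x => ENNReal.toReal_nonneg
  have hgsum : Summable g := ENNReal.summable_toReal (by simp [hμ])
  have hgtsum : ∑' x, g x = 1 := by
    rw [hg, ← ENNReal.tsum_toReal_eq
      (fun x => ne_top_of_le_ne_top (by simp [hμ]) (ENNReal.le_tsum x)), hμ, ENNReal.toReal_one]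
  -- choose ε
  set ε : ℝ := δ / (4 * (‖m‖ + 1)) with hε
  have hmn : (0:ℝ) ≤ ‖m‖ := norm_nonneg m
  have hεpos : 0 < ε := by positivity
  have hεδ : ε < δ := by
    rw [hε, div_lt_iff₀ (by positivity)]; nlinarith
  -- summable exponential for small vectors
  have hrep : ∀ γ : Fin d → ℝ, ‖γ‖ < δ →
      Summable (fun x : Fin d → ℤ => g x * Real.exp (∑ i, γ i * (x i : ℝ))) :=
    fun γ h => (Rgen_repr μ hμ γ (hfin γ h)).1
  -- coordinate summability
  have hcoord : ∀ i : Fin d, Summable (fun x : Fin d → ℤ => g x * (x i : ℝ)) := by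
    intro i
    have hsn : ‖(Pi.single i ε : Fin d → ℝ)‖ < δ := by
      rw [Pi.norm_single]; simpa [abs_of_pos hεpos] using hεδ
    have hsn' : ‖(Pi.single i (-ε) : Fin d → ℝ)‖ < δ := by
      rw [Pi.norm_single]; simpa [abs_of_pos hεpos] using hεδ
    have hp1 := hrep _ hsn
    have hp2 := hrep _ hsn'
    have hexp : ∀ (a : ℝ) (x : Fin d → ℤ),
        (∑ j, (Pi.single i a : Fin d → ℝ) j * (x j : ℝ)) = a * (x i : ℝ) := by
      intro a x
      rw [Finset.sum_eq_single i (fun j _ hj => by simp [Pi.single_apply, hj]) (by simp)]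
      simp
    have hbound : ∀ x, |g x * (x i : ℝ)| ≤
        ε⁻¹ * (g x * Real.exp (ε * (x i : ℝ)) + g x * Real.exp (-ε * (x i : ℝ))) := by
      intro x
      have h1 : ε * |(x i : ℝ)| ≤ Real.exp (ε * |(x i : ℝ)|) := by
        have := Real.add_one_le_exp (ε * |(x i : ℝ)|); linarith
      have h2 : Real.exp (ε * |(x i : ℝ)|) ≤
          Real.exp (ε * (x i : ℝ)) + Real.exp (-ε * (x i : ℝ)) := by
        have := exp_abs_le (ε * (x i : ℝ))
        rw [abs_mul, abs_of_pos hεpos] at this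
        rw [neg_mul]
        exact this
      have h3 : |(x i : ℝ)| ≤ ε⁻¹ * (Real.exp (ε * (x i : ℝ)) + Real.exp (-ε * (x i : ℝ))) := by
        rw [le_inv_mul_iff₀ hεpos]; calc ε * |(x i:ℝ)| ≤ _ := h1
                                       _ ≤ _ := h2
      rw [abs_mul, abs_of_nonneg (hgnn x)]
      calc g x * |(x i : ℝ)| ≤ g x * (ε⁻¹ * (Real.exp (ε * (x i : ℝ)) + Real.exp (-ε * (x i : ℝ)))) :=
            mul_le_mul_of_nonneg_left h3 (hgnn x)
        _ = ε⁻¹ * (g x * Real.exp (ε * (x i : ℝ)) + g x * Real.exp (-ε * (x i : ℝ))) := by ring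
    have hS : Summable (fun x : Fin d → ℤ =>
        ε⁻¹ * (g x * Real.exp (ε * (x i : ℝ)) + g x * Real.exp (-ε * (x i : ℝ)))) := by
      apply Summable.mul_left
      refine Summable.add (hp1.congr fun x => ?_) (hp2.congr fun x => ?_) <;>
        rw [hexp]
    have habs : Summable (fun x : Fin d → ℤ => |g x * (x i : ℝ)|) :=
      Summable.of_nonneg_of_le (fun x => abs_nonneg _) hbound hS
    exact habs.of_abs
  -- the sum of g x * c x
  have hcsummand : ∀ x, g x * c x = ∑ i, m i * (g x * (x i : ℝ)) := by
    intro x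
    rw [hc, Finset.mul_sum]
    apply Finset.sum_congr rfl; intro i _; ring
  have hcsum : Summable (fun x => g x * c x) := by
    refine (summable_sum (s := Finset.univ)
      (fun i _ => ((hcoord i).mul_left (m i)))).congr fun x => (hcsummand x).symm
  have hM : ∑' x, g x * c x = ∑ i, (m i) ^ 2 := by
    calc ∑' x, g x * c x = ∑' x, ∑ i, m i * (g x * (x i : ℝ)) := tsum_congr hcsummand
      _ = ∑ i, ∑' x, m i * (g x * (x i : ℝ)) :=
          Summable.tsum_finsetSum (fun i _ => (hcoord i).mul_left (m i))
      _ = ∑ i, (m i) ^ 2 := by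
          apply Finset.sum_congr rfl; intro i _
          rw [tsum_mul_left,
            show (∑' (x : Fin d → ℤ), g x * ((x i : ℤ) : ℝ)) = m i from rfl]; ring
  set M : ℝ := ∑ i, (m i) ^ 2 with hMdef
  have hMpos : 0 < M := by
    have : ∃ i, m i ≠ 0 := by
      by_contra h
      push_neg at h
      exact hm (funext fun i => h i)
    obtain ⟨i, hi⟩ := this
    exact Finset.sum_pos' (fun j _ => sq_nonneg _)
      ⟨i, Finset.mem_univ i, by positivity⟩
  -- quadratic term
  have hcexp : ∀ (t : ℝ) (x : Fin d → ℤ), (∑ i, (t • m) i * (x i : ℝ)) = t * c x := by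
    intro t x
    rw [hc, Finset.mul_sum]
    apply Finset.sum_congr rfl; intro i _; simp [smul_eq_mul]; ring
  have hnorm_tm : ∀ t : ℝ, ‖t • m‖ = |t| * ‖m‖ := fun t => by
    rw [norm_smul, Real.norm_eq_abs]
  have h2εm : ‖(2 * ε) • m‖ < δ := by
    rw [hnorm_tm, abs_of_pos (by positivity), hε]
    calc 2 * (δ / (4 * (‖m‖ + 1))) * ‖m‖ = δ * (2 * ‖m‖) / (4 * (‖m‖ + 1)) := by ring
      _ < δ := by
          rw [div_lt_iff₀ (by positivity)]
          nlinarith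
  have hn2εm : ‖(-(2 * ε)) • m‖ < δ := by
    rw [hnorm_tm, abs_neg, abs_of_pos (by positivity)]
    rw [← abs_of_pos (show (0:ℝ) < 2*ε by positivity), ← hnorm_tm]
    exact h2εm
  have hq1 := hrep _ h2εm
  have hq2 := hrep _ hn2εm
  have hq1' : Summable (fun x : Fin d → ℤ => g x * Real.exp (2 * ε * c x)) :=
    hq1.congr fun x => by rw [hcexp]
  have hq2' : Summable (fun x : Fin d → ℤ => g x * Real.exp (-(2 * ε) * c x)) :=
    hq2.congr fun x => by rw [hcexp]
  set h : (Fin d → ℤ) → ℝ := fun x => g x * ((c x) ^ 2 * Real.exp (ε * |c x|)) with hh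
  have hhbound : ∀ x, h x ≤ 4 / ε ^ 2 * (g x * Real.exp (2 * ε * c x) + g x * Real.exp (-(2 * ε) * c x)) := by
    intro x
    have h1 : (c x) ^ 2 ≤ 4 / ε ^ 2 * Real.exp (ε * |c x|) := sq_le_exp_abs hεpos (c x)
    have h2 : Real.exp (ε * |c x|) * Real.exp (ε * |c x|) = Real.exp (2 * ε * |c x|) := by
      rw [← Real.exp_add]; ring_nf
    have h3 : Real.exp (2 * ε * |c x|) ≤ Real.exp (2 * ε * c x) + Real.exp (-(2*ε) * c x) := by
      have := exp_abs_le (2 * ε * c x)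
      rw [abs_mul, abs_of_pos (by positivity : (0:ℝ) < 2 * ε)] at this
      rw [neg_mul]
      exact this
    have h4 : (c x) ^ 2 * Real.exp (ε * |c x|) ≤
        4 / ε ^ 2 * (Real.exp (2 * ε * c x) + Real.exp (-(2*ε) * c x)) := by
      calc (c x) ^ 2 * Real.exp (ε * |c x|)
          ≤ (4 / ε ^ 2 * Real.exp (ε * |c x|)) * Real.exp (ε * |c x|) :=
            mul_le_mul_of_nonneg_right h1 (Real.exp_nonneg _)
        _ = 4 / ε ^ 2 * Real.exp (2 * ε * |c x|) := by rw [mul_assoc, h2]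
        _ ≤ _ := mul_le_mul_of_nonneg_left h3 (by positivity)
    calc h x ≤ g x * (4 / ε ^ 2 * (Real.exp (2 * ε * c x) + Real.exp (-(2*ε) * c x))) :=
          mul_le_mul_of_nonneg_left h4 (hgnn x)
      _ = _ := by ring
  have hhnn : ∀ x, 0 ≤ h x := fun x => by
    have := Real.exp_nonneg (ε * |c x|); positivity
  have hhsum : Summable h :=
    Summable.of_nonneg_of_le hhnn hhbound (((hq1'.add hq2')).mul_left _)
  set K : ℝ := ∑' x, h x with hK
  have hKnn : 0 ≤ K := tsum_nonneg hhnn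
  -- choose t
  set t : ℝ := min ε (M / (K + 1)) with ht
  have htpos : 0 < t := lt_min hεpos (by positivity)
  have htε : t ≤ ε := min_le_left _ _
  have htM : t ≤ M / (K + 1) := min_le_right _ _
  have htm : ‖(-t) • m‖ < δ := by
    rw [hnorm_tm, abs_neg, abs_of_pos htpos]
    calc t * ‖m‖ ≤ ε * ‖m‖ := mul_le_mul_of_nonneg_right htε hmn
      _ ≤ |2 * ε| * ‖m‖ := by
          apply mul_le_mul_of_nonneg_right _ hmn
          rw [abs_of_pos (by positivity)]; linarith
      _ = ‖(2*ε) • m‖ := (hnorm_tm _).symm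
      _ < δ := h2εm
  -- pointwise bound
  have hpoint : ∀ x, g x * Real.exp (-t * c x) ≤ g x + ((-t) * (g x * c x) + t ^ 2 * h x) := by
    intro x
    have h1 := exp_le_quadratic (-t * c x)
    have h2 : Real.exp |(-t) * c x| ≤ Real.exp (ε * |c x|) := by
      apply Real.exp_le_exp.2
      rw [abs_mul, abs_neg, abs_of_pos htpos]
      exact mul_le_mul_of_nonneg_right htε (abs_nonneg _)
    have h3 : Real.exp (-t * c x) ≤ 1 + (-t * c x) + t^2 * ((c x)^2 * Real.exp (ε * |c x|)) := by
      have h4 : (-t * c x) ^ 2 * Real.exp |(-t) * c x| ≤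
          t ^ 2 * ((c x) ^ 2 * Real.exp (ε * |c x|)) := by
        have : (-t * c x) ^ 2 = t ^ 2 * (c x) ^ 2 := by ring
        rw [this, mul_assoc]
        exact mul_le_mul_of_nonneg_left
          (mul_le_mul_of_nonneg_left h2 (sq_nonneg _)) (sq_nonneg t)
      calc Real.exp (-t * c x) ≤ 1 + (-t * c x) + (-t * c x)^2 * Real.exp |(-t) * c x| := by
            simpa using h1
        _ ≤ _ := by linarith
    calc g x * Real.exp (-t * c x)
        ≤ g x * (1 + (-t * c x) + t^2 * ((c x)^2 * Real.exp (ε * |c x|))) :=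
          mul_le_mul_of_nonneg_left h3 (hgnn x)
      _ = g x + ((-t) * (g x * c x) + t ^ 2 * h x) := by rw [hh]; ring
  -- sum it up
  have hFsum : Summable (fun x => g x * Real.exp (-t * c x)) :=
    (hrep _ htm).congr fun x => by rw [hcexp]
  have hRHSsum : Summable (fun x => g x + ((-t) * (g x * c x) + t ^ 2 * h x)) :=
    hgsum.add ((hcsum.mul_left _).add (hhsum.mul_left _))
  have hF : (∑' x, g x * Real.exp (-t * c x)) ≤ 1 + ((-t) * M + t ^ 2 * K) := by
    calc (∑' x, g x * Real.exp (-t * c x))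
        ≤ ∑' x, (g x + ((-t) * (g x * c x) + t ^ 2 * h x)) :=
          Summable.tsum_le_tsum hpoint hFsum hRHSsum
      _ = (∑' x, g x) + ∑' x, ((-t) * (g x * c x) + t ^ 2 * h x) :=
          Summable.tsum_add hgsum ((hcsum.mul_left _).add (hhsum.mul_left _))
      _ = 1 + ((-t) * M + t ^ 2 * K) := by
          rw [hgtsum, Summable.tsum_add (hcsum.mul_left _) (hhsum.mul_left _),
            tsum_mul_left, tsum_mul_left, hM, hK]
  have hlt : 1 + ((-t) * M + t ^ 2 * K) < 1 := by
    have h1 : t * K < M := by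
      calc t * K ≤ M / (K + 1) * K := mul_le_mul_of_nonneg_right htM hKnn
        _ < M := by
            rw [div_mul_eq_mul_div, div_lt_iff₀ (by positivity)]
            nlinarith
    nlinarith
  refine ⟨(-t) • m, ?_⟩
  have hrepr := (Rgen_repr μ hμ ((-t) • m) (hfin _ htm)).2
  rw [hrepr]
  apply ENNReal.ofReal_lt_one.2
  calc (∑' x, g x * Real.exp (∑ i, ((-t) • m) i * (x i : ℝ)))
      = ∑' x, g x * Real.exp (-t * c x) := by
        apply tsum_congr; intro x; rw [hcexp]
    _ ≤ 1 + ((-t) * M + t ^ 2 * K) := hF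
    _ < 1 := hlt


lemma rnorm_smul (t : ℝ) (x : Fin d → ℝ) : rnorm (t • x) = |t| * rnorm x := by
  unfold rnorm
  have : ∑ i, ((t • x) i) ^ 2 = t ^ 2 * ∑ i, (x i) ^ 2 := by
    rw [Finset.mul_sum]; apply Finset.sum_congr rfl; intro i _
    simp [smul_eq_mul]; ring
  rw [this, Real.sqrt_mul (sq_nonneg t), Real.sqrt_sq_eq_abs]

lemma continuous_rnorm : Continuous (rnorm (d := d)) :=
  Real.continuous_sqrt.comp (continuous_finset_sum _ fun i _ => (continuous_apply i).pow 2)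

lemma Rgen_convex (μ : (Fin d → ℤ) → ℝ≥0∞) (α β : Fin d → ℝ) {t : ℝ}
    (ht0 : 0 ≤ t) (ht1 : t ≤ 1) :
    Rgen μ ((1 - t) • α + t • β) ≤
      ENNReal.ofReal (1 - t) * Rgen μ α + ENNReal.ofReal t * Rgen μ β := by
  have hpoint : ∀ x : Fin d → ℤ,
      μ x * ENNReal.ofReal (Real.exp (∑ i, ((1 - t) • α + t • β) i * (x i : ℝ))) ≤
        ENNReal.ofReal (1 - t) * (μ x * ENNReal.ofReal (Real.exp (∑ i, α i * (x i : ℝ)))) +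
        ENNReal.ofReal t * (μ x * ENNReal.ofReal (Real.exp (∑ i, β i * (x i : ℝ)))) := by
    intro x
    set A : ℝ := ∑ i, α i * (x i : ℝ) with hA
    set B : ℝ := ∑ i, β i * (x i : ℝ) with hB
    have hsum : (∑ i, ((1 - t) • α + t • β) i * (x i : ℝ)) = (1 - t) * A + t * B := by
      rw [hA, hB, Finset.mul_sum, Finset.mul_sum, ← Finset.sum_add_distrib]
      apply Finset.sum_congr rfl; intro i _
      simp [smul_eq_mul]; ring
    have hconv : Real.exp ((1 - t) * A + t * B) ≤ (1 - t) * Real.exp A + t * Real.exp B :=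
      convexOn_exp.2 (Set.mem_univ A) (Set.mem_univ B) (by linarith) ht0 (by ring)
    have h1 : ENNReal.ofReal (Real.exp (∑ i, ((1 - t) • α + t • β) i * (x i : ℝ))) ≤
        ENNReal.ofReal (1 - t) * ENNReal.ofReal (Real.exp A) +
          ENNReal.ofReal t * ENNReal.ofReal (Real.exp B) := by
      rw [hsum, ← ENNReal.ofReal_mul (by linarith), ← ENNReal.ofReal_mul ht0,
        ← ENNReal.ofReal_add (mul_nonneg (by linarith) (Real.exp_nonneg _)) (mul_nonneg ht0 (Real.exp_nonneg _))]
      exact ENNReal.ofReal_le_ofReal hconv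
    calc μ x * ENNReal.ofReal (Real.exp (∑ i, ((1 - t) • α + t • β) i * (x i : ℝ)))
        ≤ μ x * (ENNReal.ofReal (1 - t) * ENNReal.ofReal (Real.exp A) +
            ENNReal.ofReal t * ENNReal.ofReal (Real.exp B)) := mul_le_mul_right h1 _
      _ = ENNReal.ofReal (1 - t) * (μ x * ENNReal.ofReal (Real.exp A)) +
            ENNReal.ofReal t * (μ x * ENNReal.ofReal (Real.exp B)) := by ring
  calc Rgen μ ((1 - t) • α + t • β)
      ≤ ∑' x : Fin d → ℤ,
          (ENNReal.ofReal (1 - t) * (μ x * ENNReal.ofReal (Real.exp (∑ i, α i * (x i : ℝ)))) +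
           ENNReal.ofReal t * (μ x * ENNReal.ofReal (Real.exp (∑ i, β i * (x i : ℝ))))) :=
        ENNReal.tsum_le_tsum hpoint
    _ = ENNReal.ofReal (1 - t) * Rgen μ α + ENNReal.ofReal t * Rgen μ β := by
        rw [ENNReal.tsum_add, ENNReal.tsum_mul_left, ENNReal.tsum_mul_left]; rfl

end RW
end

open RW

theorem statement18 {d : ℕ}
    (μ : (Fin d → ℤ) → ℝ≥0∞) (hμ : (∑' z, μ z) = 1)
    (C : Set (Fin d → ℝ)) (hCopen : IsOpen C) (hCconv : Convex ℝ C) (hCne : C.Nonempty)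
    (hcone : ∀ t : ℝ, 0 < t → ∀ x ∈ C, t • x ∈ C)
    (E : Set (Fin d → ℤ)) (hE : E = {x | toR x ∈ closure C})
    (p : (Fin d → ℤ) → (Fin d → ℤ) → ℝ≥0∞)
    (hp : p = fun x y => if x ∈ E ∧ y ∈ E then μ (y - x) else 0)
    -- (C0')
    (htrans : ∀ x ∈ E, green p x x < ⊤)
    (κ : ℝ) (hκ : 0 < κ)
    (S : Set (Fin d → ℤ)) (hSfin : S.Finite) (hSsupp : ∀ z ∈ S, μ z ≠ 0)
    (hcomm : ∀ x ∈ E, ∀ y ∈ E, x ≠ y → ∃ (m : ℕ) (f : ℕ → Fin d → ℤ),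
      f 0 = x ∧ f m = y ∧ (m : ℝ) ≤ κ * rnorm (toR (y - x)) ∧
      (∀ j ≤ m, f j ∈ E) ∧ ∀ j < m, f (j + 1) - f j ∈ S)
    -- (C2')
    (hRfin : ∃ U : Set (Fin d → ℝ), IsOpen U ∧ {α | Rgen μ α ≤ 1} ⊆ U ∧
      ∀ α ∈ U, Rgen μ α < ⊤)
    (hmean : (fun i => ∑' x : Fin d → ℤ, (μ x).toReal * (x i : ℝ)) ≠ (0 : Fin d → ℝ))
    -- statement
    (α : Fin d → ℝ) (hα : Rgen μ α ≤ 1)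
    (u v : Fin d → ℝ) (hu : u ∈ closure C) (hv : v ∈ closure C)
    (un vn : ℕ → Fin d → ℤ) (hun : ∀ n, un n ∈ E) (hvn : ∀ n, vn n ∈ E)
    (hulim : Tendsto (fun n : ℕ => (n : ℝ)⁻¹ • toR (un n)) atTop (nhds u))
    (hvlim : Tendsto (fun n : ℕ => (n : ℝ)⁻¹ • toR (vn n)) atTop (nhds v)) :
    Filter.limsup (fun n => Real.log ((green p (un n) (vn n)).toReal) / n) atTop ≤
      -(∑ i, α i * (v i - u i)) := by
  classical
  obtain ⟨U, hUopen, hUsub, hUfin⟩ := hRfin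
  have hR0 : Rgen μ 0 = 1 := by
    rw [Rgen]
    rw [← hμ]
    apply tsum_congr; intro x
    simp
  have h0U : (0 : Fin d → ℝ) ∈ U := hUsub (by simp [hR0])
  obtain ⟨δ, hδpos, hball⟩ := Metric.isOpen_iff.1 hUopen 0 h0U
  have hfinδ : ∀ γ : Fin d → ℝ, ‖γ‖ < δ → Rgen μ γ < ⊤ := fun γ h =>
    hUfin γ (hball (by rwa [Metric.mem_ball, dist_zero_right]))
  obtain ⟨β₀, hβ₀⟩ := exists_Rgen_lt_one μ hμ δ hδpos hfinδ hmean
  have hple : ∀ x y, p x y ≤ μ (y - x) := by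
    intro x y; rw [hp]; dsimp only; split_ifs
    · exact le_rfl
    · exact zero_le
  have hGfin : ∀ x y : Fin d → ℤ, green p x y ≠ ⊤ := by
    intro x y
    refine ne_top_of_le_ne_top ?_ (green_le μ p hple β₀ x y)
    exact ENNReal.mul_ne_top (ENNReal.inv_ne_top.2 (tsub_pos_iff_lt.2 hβ₀).ne')
      (phi_ne_top β₀ (x - y))
  -- min jump probability
  set ρ : ℝ≥0∞ := (hSfin.toFinset.inf μ) ⊓ 1 with hρdef
  have hρ1 : ρ ≤ 1 := inf_le_right
  have hρtop : ρ ≠ ⊤ := ne_top_of_le_ne_top ENNReal.one_ne_top hρ1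
  have hρ0 : 0 < ρ := by
    refine lt_inf_iff.2 ⟨?_, zero_lt_one⟩
    refine (Finset.lt_inf_iff (show (0:ℝ≥0∞) < ⊤ from ENNReal.zero_lt_top)).2 ?_
    intro z hz
    exact pos_iff_ne_zero.2 (hSsupp z (hSfin.mem_toFinset.1 hz))
  set ρr : ℝ := ρ.toReal with hρr
  have hρrpos : 0 < ρr := ENNReal.toReal_pos hρ0.ne' hρtop
  have hρr1 : ρr ≤ 1 := by
    rw [hρr, ← ENNReal.toReal_one]
    exact ENNReal.toReal_mono ENNReal.one_ne_top hρ1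
  have hLρ : Real.log ρr ≤ 0 := Real.log_nonpos hρrpos.le hρr1
  -- lower bound on the Green function
  have hgreen_lower : ∀ x ∈ E, ∀ y ∈ E, 0 < green p x y ∧
      κ * rnorm (toR (y - x)) * Real.log ρr ≤ Real.log ((green p x y).toReal) := by
    intro x hx y hy
    by_cases hxy : x = y
    · subst hxy
      have h1 : (1:ℝ≥0∞) ≤ green p x x := by
        have := le_green p 0 x x
        simpa [kiter] using this
      refine ⟨lt_of_lt_of_le zero_lt_one h1, ?_⟩
      have h2 : (1:ℝ) ≤ (green p x x).toReal := by
        have := ENNReal.toReal_mono (hGfin x x) h1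
        simpa using this
      have h3 : rnorm (toR (x - x)) = 0 := by
        simp [toR, rnorm]
      rw [h3]
      simpa using Real.log_nonneg h2
    · obtain ⟨mm, f, hf0, hfm, hmlen, hfE, hfS⟩ := hcomm x hx y hy hxy
      have hfac : ∀ j < mm, ρ ≤ p (f j) (f (j+1)) := by
        intro j hj
        have hpe : p (f j) (f (j+1)) = μ (f (j+1) - f j) := by
          rw [hp]; dsimp only; split_ifs with hcond
          · rfl
          · exact absurd ⟨hfE j hj.le, hfE (j+1) hj⟩ hcond
        rw [hpe]
        exact le_trans inf_le_left (Finset.inf_le (hSfin.mem_toFinset.2 (hfS j hj)))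
      have hprod : ρ ^ mm ≤ green p x y := by
        calc ρ ^ mm = ∏ _j ∈ Finset.range mm, ρ := by
              rw [Finset.prod_const, Finset.card_range]
          _ ≤ ∏ j ∈ Finset.range mm, p (f j) (f (j+1)) :=
              Finset.prod_le_prod' fun j hj => hfac j (Finset.mem_range.1 hj)
          _ ≤ kiter p mm (f 0) (f mm) := prod_le_kiter p mm f
          _ = kiter p mm x y := by rw [hf0, hfm]
          _ ≤ green p x y := le_green p mm x y
      refine ⟨lt_of_lt_of_le (ENNReal.pow_pos hρ0 mm) hprod, ?_⟩
      have h1 : ρr ^ mm ≤ (green p x y).toReal := by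
        have := ENNReal.toReal_mono (hGfin x y) hprod
        rwa [ENNReal.toReal_pow] at this
      have h2 := Real.log_le_log (pow_pos hρrpos mm) h1
      rw [Real.log_pow] at h2
      have h3 : κ * rnorm (toR (y - x)) * Real.log ρr ≤ (mm : ℝ) * Real.log ρr :=
        mul_le_mul_of_nonpos_right hmlen hLρ
      linarith
  set F : ℕ → ℝ := fun n => Real.log ((green p (un n) (vn n)).toReal) / n with hF
  -- coboundedness from below
  set b : ℕ → ℝ := fun n =>
    κ * rnorm ((n:ℝ)⁻¹ • (toR (vn n) - toR (un n))) * Real.log ρr with hb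
  have hbF : ∀ᶠ n in atTop, b n ≤ F n := by
    filter_upwards [eventually_ge_atTop 1] with n hn
    have hnpos : (0:ℝ) < n := by exact_mod_cast hn
    have hlow := (hgreen_lower (un n) (hun n) (vn n) (hvn n)).2
    have hdiv : κ * rnorm (toR (vn n - un n)) * Real.log ρr / n ≤ F n := by
      rw [hF]; dsimp only; gcongr
    have heq : κ * rnorm (toR (vn n - un n)) * Real.log ρr / n = b n := by
      rw [hb]; dsimp only
      have h1 : toR (vn n - un n) = toR (vn n) - toR (un n) := by
        funext i; simp only [toR, Pi.sub_apply]; push_cast; ring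
      have h2 : rnorm ((n:ℝ)⁻¹ • (toR (vn n) - toR (un n)))
          = (n:ℝ)⁻¹ * rnorm (toR (vn n) - toR (un n)) := by
        rw [rnorm_smul, abs_of_pos (inv_pos.2 hnpos)]
      rw [h2, ← h1, div_eq_mul_inv]; ring
    linarith [hdiv, heq.ge]
  have hbtend : Tendsto b atTop (nhds (κ * rnorm (v - u) * Real.log ρr)) := by
    have h1 : Tendsto (fun n : ℕ => (n:ℝ)⁻¹ • toR (vn n) - (n:ℝ)⁻¹ • toR (un n))
        atTop (nhds (v - u)) := hvlim.sub hulim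
    have h2 : Tendsto (fun n : ℕ => (n:ℝ)⁻¹ • (toR (vn n) - toR (un n)))
        atTop (nhds (v - u)) := h1.congr fun n => (smul_sub _ _ _).symm
    have h3 : Tendsto (fun n : ℕ => rnorm ((n:ℝ)⁻¹ • (toR (vn n) - toR (un n))))
        atTop (nhds (rnorm (v - u))) := (continuous_rnorm.tendsto (v - u)).comp h2
    exact (h3.const_mul κ).mul_const (Real.log ρr)
  have hFcob : IsCoboundedUnder (· ≤ ·) atTop F := by
    refine isCoboundedUnder_le_of_eventually_le atTop
      (x := κ * rnorm (v - u) * Real.log ρr - 1) ?_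
    have hev := hbtend.eventually_const_le
      (show κ * rnorm (v - u) * Real.log ρr - 1 < κ * rnorm (v - u) * Real.log ρr by linarith)
    filter_upwards [hbF, hev] with n h1 h2
    linarith
  -- key upper bound for any β with Rgen μ β < 1
  have key : ∀ β : Fin d → ℝ, Rgen μ β < 1 →
      Filter.limsup F atTop ≤ -(∑ i, β i * (v i - u i)) := by
    intro β hβ
    have hsub0 : (1 - Rgen μ β) ≠ 0 := (tsub_pos_iff_lt.2 hβ).ne'
    set cE : ℝ≥0∞ := (1 - Rgen μ β)⁻¹ with hcE
    have hcEtop : cE ≠ ⊤ := ENNReal.inv_ne_top.2 hsub0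
    have hcE0 : cE ≠ 0 :=
      ENNReal.inv_ne_zero.2 (ne_top_of_le_ne_top ENNReal.one_ne_top tsub_le_self)
    set cr : ℝ := cE.toReal with hcr
    have hcrpos : 0 < cr := ENNReal.toReal_pos hcE0 hcEtop
    set s : ℕ → ℝ := fun n =>
      (Real.log cr + ∑ i, β i * ((un n i : ℝ) - (vn n i : ℝ))) / n with hs
    have hFs : ∀ᶠ n in atTop, F n ≤ s n := by
      filter_upwards [eventually_ge_atTop 1] with n hn
      have hnpos : (0:ℝ) < n := by exact_mod_cast hn
      have hG := green_le μ p hple β (un n) (vn n)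
      have hGr : (green p (un n) (vn n)).toReal ≤
          cr * Real.exp (∑ i, β i * ((un n i : ℝ) - (vn n i : ℝ))) := by
        have h2 : (cE * phi β (un n - vn n)).toReal
            = cr * Real.exp (∑ i, β i * (((un n - vn n) i : ℤ) : ℝ)) := by
          rw [ENNReal.toReal_mul, hcr]
          congr 1
          exact ENNReal.toReal_ofReal (Real.exp_nonneg _)
        have h3 : (∑ i, β i * (((un n - vn n) i : ℤ) : ℝ))
            = ∑ i, β i * ((un n i : ℝ) - (vn n i : ℝ)) := by
          apply Finset.sum_congr rfl; intro i _
          simp only [Pi.sub_apply]; push_cast; ring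
        have h4 := ENNReal.toReal_mono
          (ENNReal.mul_ne_top hcEtop (phi_ne_top β _)) hG
        rw [h2, h3] at h4
        exact h4
      have hGpos : 0 < (green p (un n) (vn n)).toReal :=
        ENNReal.toReal_pos (hgreen_lower _ (hun n) _ (hvn n)).1.ne' (hGfin _ _)
      have hlog : Real.log ((green p (un n) (vn n)).toReal) ≤
          Real.log cr + ∑ i, β i * ((un n i : ℝ) - (vn n i : ℝ)) := by
        have h5 := Real.log_le_log hGpos hGr
        rwa [Real.log_mul hcrpos.ne' (Real.exp_ne_zero _), Real.log_exp] at h5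
      rw [hF, hs]; dsimp only; gcongr
    have hstend : Tendsto s atTop (nhds (-(∑ i, β i * (v i - u i)))) := by
      have hseq : s = fun n : ℕ => Real.log cr * (n:ℝ)⁻¹ +
          ∑ i, β i * (((n:ℝ)⁻¹ • toR (un n)) i - ((n:ℝ)⁻¹ • toR (vn n)) i) := by
        funext n
        rcases Nat.eq_zero_or_pos n with h0 | hposn
        · rw [hs]; subst h0; simp
        · have hn0 : ((n:ℝ)) ≠ 0 := (Nat.cast_pos.2 hposn).ne'
          rw [hs]; dsimp only
          rw [div_eq_mul_inv, add_mul, Finset.sum_mul]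
          congr 1
          apply Finset.sum_congr rfl; intro i _
          simp only [Pi.smul_apply, smul_eq_mul, toR]
          ring
      rw [hseq]
      have h1 : Tendsto (fun n : ℕ => Real.log cr * (n:ℝ)⁻¹) atTop (nhds 0) := by
        simpa using (tendsto_inv_atTop_nhds_zero_nat (𝕜 := ℝ)).const_mul (Real.log cr)
      have h2 : ∀ i : Fin d, Tendsto
          (fun n : ℕ => ((n:ℝ)⁻¹ • toR (un n)) i - ((n:ℝ)⁻¹ • toR (vn n)) i)
          atTop (nhds (u i - v i)) := fun i =>
        (((continuous_apply i).tendsto u).comp hulim).sub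
          (((continuous_apply i).tendsto v).comp hvlim)
      have h3 : Tendsto (fun n : ℕ =>
          ∑ i, β i * (((n:ℝ)⁻¹ • toR (un n)) i - ((n:ℝ)⁻¹ • toR (vn n)) i))
          atTop (nhds (∑ i, β i * (u i - v i))) :=
        tendsto_finset_sum _ fun i _ => (h2 i).const_mul (β i)
      have h4 := h1.add h3
      rw [zero_add] at h4
      have h5 : (∑ i, β i * (u i - v i)) = -(∑ i, β i * (v i - u i)) := by
        rw [← Finset.sum_neg_distrib]
        apply Finset.sum_congr rfl; intro i _; ring
      rwa [h5] at h4
    calc Filter.limsup F atTop ≤ Filter.limsup s atTop :=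
          limsup_le_limsup hFs hFcob hstend.isBoundedUnder_le
      _ = _ := hstend.limsup_eq
  -- conclude by approximating α
  set Sα : ℝ := ∑ i, α i * (v i - u i) with hSα
  set Sβ : ℝ := ∑ i, β₀ i * (v i - u i) with hSβ
  have hexpand : ∀ t : ℝ, (∑ i, ((1 - t) • α + t • β₀) i * (v i - u i))
      = (1 - t) * Sα + t * Sβ := by
    intro t
    rw [hSα, hSβ, Finset.mul_sum, Finset.mul_sum, ← Finset.sum_add_distrib]
    apply Finset.sum_congr rfl; intro i _
    simp only [Pi.add_apply, Pi.smul_apply, smul_eq_mul]; ring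
  have hβk : ∀ k : ℕ, Rgen μ ((1 - 1/(k+1:ℝ)) • α + (1/(k+1:ℝ)) • β₀) < 1 := by
    intro k
    have hk1 : (0:ℝ) < (k:ℝ) + 1 := by positivity
    have ht0 : (0:ℝ) ≤ 1/(k+1:ℝ) := by positivity
    have htpos : (0:ℝ) < 1/(k+1:ℝ) := by positivity
    have ht1 : 1/(k+1:ℝ) ≤ 1 := by
      rw [div_le_one hk1]; linarith [(Nat.cast_nonneg k : (0:ℝ) ≤ (k:ℝ))]
    calc Rgen μ ((1 - 1/(k+1:ℝ)) • α + (1/(k+1:ℝ)) • β₀)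
        ≤ ENNReal.ofReal (1 - 1/(k+1:ℝ)) * Rgen μ α
            + ENNReal.ofReal (1/(k+1:ℝ)) * Rgen μ β₀ := Rgen_convex μ α β₀ ht0 ht1
      _ ≤ ENNReal.ofReal (1 - 1/(k+1:ℝ)) * 1
            + ENNReal.ofReal (1/(k+1:ℝ)) * Rgen μ β₀ := by gcongr
      _ < ENNReal.ofReal (1 - 1/(k+1:ℝ)) * 1 + ENNReal.ofReal (1/(k+1:ℝ)) * 1 := by
          refine ENNReal.add_lt_add_left
            (ENNReal.mul_ne_top ENNReal.ofReal_ne_top ENNReal.one_ne_top) ?_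
          exact (ENNReal.mul_lt_mul_iff_right (ENNReal.ofReal_pos.2 htpos).ne'
            ENNReal.ofReal_ne_top).2 hβ₀
      _ = 1 := by
          rw [mul_one, mul_one, ← ENNReal.ofReal_add (by linarith) ht0]
          norm_num
  have hlim : Tendsto (fun k : ℕ => -((1 - 1/(k+1:ℝ)) * Sα + (1/(k+1:ℝ)) * Sβ))
      atTop (nhds (-Sα)) := by
    have ht := tendsto_one_div_add_atTop_nhds_zero_nat (𝕜 := ℝ)
    have h1 := (((tendsto_const_nhds (x := (1:ℝ)) (f := atTop)).sub ht).mul_const Sα).add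
      (ht.mul_const Sβ)
    have h2 := h1.neg
    simpa using h2
  refine ge_of_tendsto hlim (Eventually.of_forall fun k => ?_)
  have h := key _ (hβk k)
  rwa [hexpand] at h
end

section
/- Under (C0'), (C1') and (C2') the function J(u,v) = liminf over admissible sequences of (1/n) log G(u_n, v_n) is finite and Lipschitz continuous on cl(𝒞) × cl(𝒞): |J(û, v̂) − J(u, v)| ≤ κ |log δ| (|û − u| + |v̂ − v|) for all (u,v), (û,v̂) ∈ cl(𝒞) × cl(𝒞). -/
open scoped ENNReal Classical BigOperators
open Filter

open RW

/-- The set of admissible values `liminf (1/n) log G(u_n, v_n)` over sequences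
`u_n/n → u`, `v_n/n → v` in `E`. -/
def Jset {d : ℕ} (p : (Fin d → ℤ) → (Fin d → ℤ) → ℝ≥0∞)
    (E : Set (Fin d → ℤ)) (u v : Fin d → ℝ) : Set ℝ :=
  {r | ∃ un vn : ℕ → Fin d → ℤ, (∀ n, un n ∈ E) ∧ (∀ n, vn n ∈ E) ∧
    Tendsto (fun n : ℕ => (n : ℝ)⁻¹ • toR (un n)) atTop (nhds u) ∧
    Tendsto (fun n : ℕ => (n : ℝ)⁻¹ • toR (vn n)) atTop (nhds v) ∧
    r = Filter.liminf (fun n => Real.log ((green p (un n) (vn n)).toReal) / n) atTop}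

noncomputable def Jfun {d : ℕ} (p : (Fin d → ℤ) → (Fin d → ℤ) → ℝ≥0∞)
    (E : Set (Fin d → ℤ)) (u v : Fin d → ℝ) : ℝ :=
  sInf (Jset p E u v)

-- ===== auxiliary lemmas =====
section Aux

open Filter

-- liminf lower bound with junk handling
lemma aux_le_liminf (b : ℝ) (hb : b ≤ 0) (f : ℕ → ℝ) (h : ∀ᶠ n in atTop, b ≤ f n) :
    b ≤ liminf f atTop := by
  rw [liminf_eq]
  by_cases hA : BddAbove {a | ∀ᶠ n in atTop, a ≤ f n}
  · exact le_csSup hA h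
  · rw [Real.sSup_of_not_bddAbove hA]; exact hb

-- liminf comparison with junk handling
lemma aux_liminf_le (f g : ℕ → ℝ) (c : ℝ) (hc : 0 ≤ c)
    (hfg : ∀ ε : ℝ, 0 < ε → ∀ᶠ n in atTop, f n ≤ g n + (c + ε))
    (hgf : ∀ ε : ℝ, 0 < ε → ∀ᶠ n in atTop, g n ≤ f n + (c + ε))
    (hf : ∃ b, b ≤ 0 ∧ ∀ᶠ n in atTop, b ≤ f n) :
    liminf f atTop ≤ liminf g atTop + c := by
  rw [liminf_eq, liminf_eq]
  set Af := {a | ∀ᶠ n in atTop, a ≤ f n} with hAf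
  set Ag := {a | ∀ᶠ n in atTop, a ≤ g n} with hAg
  by_cases hBg : BddAbove Ag
  · obtain ⟨b, hb0, hbf⟩ := hf
    have hne : Af.Nonempty := ⟨b, hbf⟩
    have hmain : ∀ a ∈ Af, a ≤ sSup Ag + c := by
      intro a ha
      have key : ∀ ε : ℝ, 0 < ε → a ≤ sSup Ag + c + ε := by
        intro ε hε
        have hmem : a - (c + ε) ∈ Ag := by
          filter_upwards [ha, hfg ε hε] with n h1 h2
          linarith
        have := le_csSup hBg hmem
        linarith
      linarith [le_of_forall_pos_le_add key]
    exact csSup_le hne hmain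
  · have hBf : ¬ BddAbove Af := by
      intro ⟨M, hM⟩
      apply hBg
      refine ⟨M + (c + 1), ?_⟩
      intro a ha
      have hmem : a - (c + 1) ∈ Af := by
        filter_upwards [ha, hgf 1 one_pos] with n h1 h2
        linarith
      have := hM hmem
      linarith
    rw [Real.sSup_of_not_bddAbove hBg, Real.sSup_of_not_bddAbove hBf]
    linarith

variable {G' : Type*} (p : G' → G' → ℝ≥0∞)

lemma aux_kiter_le_one (hstoch : ∀ x, (∑' z, p x z) ≤ 1) :
    ∀ n x y, kiter p n x y ≤ 1 := by
  intro n
  induction n with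
  | zero => intro x y; simp only [kiter]; split <;> simp
  | succ n ih =>
    intro x y
    calc (∑' z, p x z * kiter p n z y) ≤ ∑' z, p x z * 1 :=
          ENNReal.tsum_le_tsum fun z => mul_le_mul_right (ih z y) _
      _ = ∑' z, p x z := by simp
      _ ≤ 1 := hstoch x

lemma aux_kiter_chapman (m n : ℕ) (x z y : G') :
    kiter p m x z * kiter p n z y ≤ kiter p (m + n) x y := by
  induction m generalizing x with
  | zero =>
    simp only [kiter, Nat.zero_add]
    split
    · rename_i h; subst h; simp
    · simp
  | succ m ih =>
    have h2 : m + 1 + n = (m + n) + 1 := by omega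
    rw [h2]
    show (∑' w, p x w * kiter p m w z) * kiter p n z y ≤ ∑' w, p x w * kiter p (m + n) w y
    rw [← ENNReal.tsum_mul_right]
    refine ENNReal.tsum_le_tsum fun w => ?_
    rw [mul_assoc]
    exact mul_le_mul_right (ih w) _

lemma aux_kiter_path (δ : ℝ≥0∞) (m : ℕ) (f : ℕ → G')
    (hstep : ∀ j < m, δ ≤ p (f j) (f (j + 1))) :
    δ ^ m ≤ kiter p m (f 0) (f m) := by
  induction m generalizing f with
  | zero => simp [kiter]
  | succ m ih =>
    have h1 : δ ^ m ≤ kiter p m (f 1) (f (m + 1)) := by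
      have := ih (fun j => f (j + 1)) (fun j hj => hstep (j + 1) (by omega))
      simpa using this
    calc δ ^ (m + 1) = δ * δ ^ m := by ring
      _ ≤ p (f 0) (f 1) * kiter p m (f 1) (f (m + 1)) :=
          mul_le_mul' (hstep 0 (by omega)) h1
      _ ≤ ∑' z, p (f 0) z * kiter p m z (f (m + 1)) := ENNReal.le_tsum _
      _ = kiter p (m + 1) (f 0) (f (m + 1)) := rfl

lemma aux_green_chain (m m' : ℕ) (x a b y : G') :
    kiter p m x a * green p a b * kiter p m' b y ≤ green p x y := by
  have h1 : ∀ n : ℕ, kiter p m x a * kiter p n a b * kiter p m' b y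
      ≤ kiter p (m + n + m') x y := by
    intro n
    calc kiter p m x a * kiter p n a b * kiter p m' b y
        ≤ kiter p (m + n) x b * kiter p m' b y :=
          mul_le_mul_left (aux_kiter_chapman p m n x a b) _
      _ ≤ kiter p (m + n + m') x y := aux_kiter_chapman p (m + n) m' x b y
  calc kiter p m x a * green p a b * kiter p m' b y
      = ∑' n, kiter p m x a * kiter p n a b * kiter p m' b y := by
        rw [green, ← ENNReal.tsum_mul_left, ← ENNReal.tsum_mul_right]
    _ ≤ ∑' n, kiter p (m + n + m') x y := ENNReal.tsum_le_tsum h1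
    _ ≤ ∑' n, kiter p n x y :=
        ENNReal.tsum_comp_le_tsum_of_injective (fun i j h => by omega) _
    _ = green p x y := rfl

variable {d : ℕ}

lemma aux_rnorm_nonneg (x : Fin d → ℝ) : 0 ≤ rnorm x := Real.sqrt_nonneg _

lemma aux_rnorm_smul (c : ℝ) (x : Fin d → ℝ) : rnorm (c • x) = |c| * rnorm x := by
  unfold rnorm
  rw [← Real.sqrt_sq_eq_abs, ← Real.sqrt_mul (sq_nonneg c), Finset.mul_sum]
  congr 1
  refine Finset.sum_congr rfl fun i _ => ?_
  simp [Pi.smul_apply, smul_eq_mul]; ring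

lemma aux_rnorm_neg (x : Fin d → ℝ) : rnorm (-x) = rnorm x := by
  unfold rnorm; congr 1; refine Finset.sum_congr rfl fun i _ => ?_; simp

lemma aux_rnorm_sub_comm (x y : Fin d → ℝ) : rnorm (x - y) = rnorm (y - x) := by
  rw [← aux_rnorm_neg (x - y), neg_sub]

lemma aux_rnorm_continuous : Continuous (rnorm (d := d)) :=
  Real.continuous_sqrt.comp (continuous_finset_sum _ fun i _ => (continuous_apply i).pow 2)

lemma aux_toR_sub (x y : Fin d → ℤ) : toR (x - y) = toR x - toR y := by
  funext i; simp [toR]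

section Cone

variable (C : Set (Fin d → ℝ)) (hCopen : IsOpen C) (hCconv : Convex ℝ C)
  (hcone : ∀ t : ℝ, 0 < t → ∀ x ∈ C, t • x ∈ C)

include hCconv hcone in
lemma aux_add_mem_closure : ∀ x ∈ closure C, ∀ c ∈ C, x + c ∈ closure C := by
  have hCC : ∀ a ∈ C, ∀ b ∈ C, a + b ∈ C := by
    intro a ha b hb
    have hmid : (1/2 : ℝ) • a + (1/2 : ℝ) • b ∈ C :=
      hCconv ha hb (by norm_num) (by norm_num) (by norm_num)
    have := hcone 2 (by norm_num) _ hmid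
    convert this using 1
    rw [smul_add, smul_smul, smul_smul]
    norm_num
  intro x hx c hc
  have hcont : Continuous (fun y : Fin d → ℝ => y + c) := continuous_id.add continuous_const
  have hmem : (fun y : Fin d → ℝ => y + c) x ∈ closure ((fun y => y + c) '' C) :=
    (image_closure_subset_closure_image hcont) ⟨x, hx, rfl⟩
  refine closure_mono ?_ hmem
  rintro _ ⟨y, hy, rfl⟩
  exact hCC y hy c hc

include hcone in
lemma aux_smul_mem_closure : ∀ x ∈ closure C, ∀ t : ℝ, 0 < t → t • x ∈ closure C := by
  intro x hx t ht
  have hcont : Continuous (fun y : Fin d → ℝ => t • y) := continuous_id.const_smul t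
  have hmem : (fun y : Fin d → ℝ => t • y) x ∈ closure ((fun y => t • y) '' C) :=
    (image_closure_subset_closure_image hcont) ⟨x, hx, rfl⟩
  refine closure_mono ?_ hmem
  rintro _ ⟨y, hy, rfl⟩
  exact hcone t ht y hy

include hcone in
lemma aux_zero_mem_closure (hCne : C.Nonempty) : (0 : Fin d → ℝ) ∈ closure C := by
  obtain ⟨w, hw⟩ := hCne
  have hT : Filter.Tendsto (fun k : ℕ => (k : ℝ)⁻¹ • w) Filter.atTop (nhds 0) := by
    simpa using (tendsto_inv_atTop_nhds_zero_nat (𝕜 := ℝ)).smul_const w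
  refine mem_closure_of_tendsto hT ?_
  filter_upwards [Filter.eventually_ge_atTop 1] with k hk
  exact hcone _ (by positivity) w hw

include hCconv hcone in
lemma aux_round_mem (w : Fin d → ℝ) (hw : w ∈ C) (ε : ℝ) (hε : 0 < ε)
    (hball : Metric.ball w ε ⊆ C) (x : Fin d → ℝ) (hx : x ∈ closure C)
    (t : ℝ) (ht : ε⁻¹ ≤ t) :
    toR (fun i => round (x i + t * w i)) ∈ closure C := by
  have htpos : 0 < t := lt_of_lt_of_le (inv_pos.2 hε) ht
  have htε : 1 ≤ t * ε := by
    rw [← inv_mul_cancel₀ hε.ne']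
    exact mul_le_mul_of_nonneg_right ht hε.le
  -- ball absorption
  have key3 : ∀ y : Fin d → ℝ, dist y (x + t • w) < t * ε → y ∈ closure C := by
    intro y hy
    have h1 : t⁻¹ • (y - x) ∈ Metric.ball w ε := by
      rw [Metric.mem_ball]
      have hdist : dist (t⁻¹ • (y - x)) (t⁻¹ • (t • w)) = |t⁻¹| * dist (y - x) (t • w) :=
        dist_smul₀ _ _ _
      rw [smul_smul, inv_mul_cancel₀ htpos.ne', one_smul] at hdist
      rw [hdist, abs_of_pos (inv_pos.2 htpos)]
      have h2 : dist (y - x) (t • w) = dist y (x + t • w) := by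
        rw [dist_eq_norm, dist_eq_norm]
        congr 1
        abel
      rw [h2]
      calc t⁻¹ * dist y (x + t • w) < t⁻¹ * (t * ε) :=
            mul_lt_mul_of_pos_left hy (inv_pos.2 htpos)
        _ = ε := by field_simp
    have h3 : y - x ∈ C := by
      have := hcone t htpos _ (hball h1)
      rwa [smul_smul, mul_inv_cancel₀ htpos.ne', one_smul] at this
    have := aux_add_mem_closure C hCconv hcone x hx _ h3
    convert this using 1
    abel
  refine key3 _ ?_
  have hd : dist (toR fun i => round (x i + t * w i)) (x + t • w) ≤ 1/2 := by
    rw [dist_pi_le_iff (by norm_num)]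
    intro i
    rw [Real.dist_eq, abs_sub_comm]
    have h0 := abs_sub_round (x i + t * w i)
    simp only [toR, Pi.add_apply, Pi.smul_apply, smul_eq_mul]
    exact h0.trans (by norm_num)
  linarith

include hCopen hCconv hcone in
lemma aux_approxE (hCne : C.Nonempty) (u : Fin d → ℝ) (hu : u ∈ closure C) :
    ∃ a : ℕ → Fin d → ℤ, (∀ n, toR (a n) ∈ closure C) ∧
      Filter.Tendsto (fun n : ℕ => (n : ℝ)⁻¹ • toR (a n)) atTop (nhds u) := by
  obtain ⟨w, hw⟩ := hCne
  obtain ⟨ε, hε, hball⟩ := Metric.isOpen_iff.1 hCopen w hw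
  set t : ℝ := ε⁻¹ with htdef
  have ht : 0 < t := inv_pos.2 hε
  refine ⟨fun n => fun i => round ((n : ℝ) * u i + t * w i), fun n => ?_, ?_⟩
  · have hnx : (n : ℝ) • u ∈ closure C := by
      rcases Nat.eq_zero_or_pos n with h | h
      · simpa [h] using aux_zero_mem_closure C hcone ⟨w, hw⟩
      · exact aux_smul_mem_closure C hcone u hu n (by exact_mod_cast h)
    have := aux_round_mem C hCconv hcone w hw ε hε hball ((n : ℝ) • u) hnx t le_rfl
    simpa [Pi.smul_apply, smul_eq_mul] using this
  · rw [tendsto_pi_nhds]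
    intro i
    have hcoord : ∀ n : ℕ, 1 ≤ n →
        |((n : ℝ)⁻¹ • toR (fun j => round ((n : ℝ) * u j + t * w j))) i - u i|
          ≤ (n : ℝ)⁻¹ * (1/2 + |t * w i|) := by
      intro n hn
      have hnpos : (0 : ℝ) < n := by exact_mod_cast hn
      have h1 : |(round ((n : ℝ) * u i + t * w i) : ℝ) - (n : ℝ) * u i|
          ≤ 1/2 + |t * w i| := by
        have h0 : |(round ((n : ℝ) * u i + t * w i) : ℝ) - ((n : ℝ) * u i + t * w i)|
            ≤ 1/2 := by
          rw [abs_sub_comm]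
          exact (abs_sub_round ((n : ℝ) * u i + t * w i)).trans (by norm_num)
        calc |(round ((n : ℝ) * u i + t * w i) : ℝ) - (n : ℝ) * u i|
            ≤ |(round ((n : ℝ) * u i + t * w i) : ℝ) - ((n : ℝ) * u i + t * w i)|
              + |t * w i| := by
              have heq : (round ((n : ℝ) * u i + t * w i) : ℝ) - (n : ℝ) * u i
                  = ((round ((n : ℝ) * u i + t * w i) : ℝ) - ((n : ℝ) * u i + t * w i))
                    + t * w i := by ring
              rw [heq]
              exact abs_add_le _ _
          _ ≤ 1/2 + |t * w i| := by linarith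
      have heq : ((n : ℝ)⁻¹ • toR (fun j => round ((n : ℝ) * u j + t * w j))) i - u i
          = (n : ℝ)⁻¹ * ((round ((n : ℝ) * u i + t * w i) : ℝ) - (n : ℝ) * u i) := by
        simp only [Pi.smul_apply, smul_eq_mul, toR]
        field_simp
      rw [heq, abs_mul, abs_of_pos (inv_pos.2 hnpos)]
      exact mul_le_mul_of_nonneg_left h1 (le_of_lt (inv_pos.2 hnpos))
    have hlim : Filter.Tendsto (fun n : ℕ => (n : ℝ)⁻¹ * (1/2 + |t * w i|)) atTop (nhds 0) := by
      simpa using (tendsto_inv_atTop_nhds_zero_nat (𝕜 := ℝ)).mul_const (1/2 + |t * w i|)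
    have hsq : Filter.Tendsto (fun n : ℕ =>
        ((n : ℝ)⁻¹ • toR (fun j => round ((n : ℝ) * u j + t * w j))) i - u i) atTop (nhds 0) :=
      squeeze_zero_norm' (by
        filter_upwards [Filter.eventually_ge_atTop 1] with n hn
        simpa using hcoord n hn) hlim
    have h2 := hsq.add (tendsto_const_nhds (x := u i))
    simpa using h2

end Cone

end Aux

theorem statement19 {d : ℕ}
    (μ : (Fin d → ℤ) → ℝ≥0∞) (hμ : (∑' z, μ z) = 1)
    (C : Set (Fin d → ℝ)) (hCopen : IsOpen C) (hCconv : Convex ℝ C) (hCne : C.Nonempty)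
    (hcone : ∀ t : ℝ, 0 < t → ∀ x ∈ C, t • x ∈ C)
    (E : Set (Fin d → ℤ)) (hE : E = {x | toR x ∈ closure C})
    (p : (Fin d → ℤ) → (Fin d → ℤ) → ℝ≥0∞)
    (hp : p = fun x y => if x ∈ E ∧ y ∈ E then μ (y - x) else 0)
    -- (C0')
    (htrans : ∀ x ∈ E, green p x x < ⊤)
    (κ : ℝ) (hκ : 0 < κ)
    (S : Set (Fin d → ℤ)) (hSfin : S.Finite) (hSsupp : ∀ z ∈ S, μ z ≠ 0)
    (hcomm : ∀ x ∈ E, ∀ y ∈ E, x ≠ y → ∃ (m : ℕ) (f : ℕ → Fin d → ℤ),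
      f 0 = x ∧ f m = y ∧ (m : ℝ) ≤ κ * rnorm (toR (y - x)) ∧
      (∀ j ≤ m, f j ∈ E) ∧ ∀ j < m, f (j + 1) - f j ∈ S)
    -- (C2')
    (hRfin : ∃ U : Set (Fin d → ℝ), IsOpen U ∧ {α | Rgen μ α ≤ 1} ⊆ U ∧
      ∀ α ∈ U, Rgen μ α < ⊤)
    (hmean : (fun i => ∑' x : Fin d → ℤ, (μ x).toReal * (x i : ℝ)) ≠ (0 : Fin d → ℝ))
    (δ : ℝ≥0∞) (hδpos : 0 < δ) (hδ : ∀ z ∈ S, δ ≤ μ z) :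
    (∀ u ∈ closure C, ∀ v ∈ closure C,
      (Jset p E u v).Nonempty ∧ BddBelow (Jset p E u v)) ∧
    ∀ u ∈ closure C, ∀ v ∈ closure C, ∀ u' ∈ closure C, ∀ v' ∈ closure C,
      |Jfun p E u' v' - Jfun p E u v| ≤
        κ * |Real.log δ.toReal| * (rnorm (u' - u) + rnorm (v' - v)) := by
  classical
  -- basic setup
  have hd : d ≠ 0 := by
    intro h
    subst h
    exact hmean (funext fun i => i.elim0)
  have hEmem : ∀ z : Fin d → ℤ, z ∈ E ↔ toR z ∈ closure C := by
    intro z; rw [hE]; rfl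
  -- step lower bound
  have hpstep : ∀ x ∈ E, ∀ y ∈ E, y - x ∈ S → δ ≤ p x y := by
    intro x hx y hy hS
    rw [hp]
    simp only [if_pos (And.intro hx hy)]
    exact hδ _ hS
  -- kiter lower bound from communication
  have hkiter : ∀ x ∈ E, ∀ y ∈ E, ∃ m : ℕ,
      (m : ℝ) ≤ κ * rnorm (toR y - toR x) ∧ δ ^ m ≤ kiter p m x y := by
    intro x hx y hy
    by_cases hxy : x = y
    · subst hxy
      refine ⟨0, ?_, by simp [kiter]⟩
      exact_mod_cast mul_nonneg hκ.le (aux_rnorm_nonneg _)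
    · obtain ⟨m, f, hf0, hfm, hmle, hfE, hfS⟩ := hcomm x hx y hy hxy
      rw [aux_toR_sub] at hmle
      refine ⟨m, hmle, ?_⟩
      have := aux_kiter_path p δ m f
        (fun j hj => hpstep _ (hfE j hj.le) _ (hfE (j+1) hj) (hfS j hj))
      rwa [hf0, hfm] at this
  -- two distinct points in E, hence δ ≤ 1
  have hiE : ∃ x₀ y₀ : Fin d → ℤ, x₀ ∈ E ∧ y₀ ∈ E ∧ x₀ ≠ y₀ := by
    obtain ⟨w, hw⟩ := hCne
    have hw' : ∃ w' ∈ C, w' ≠ 0 := by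
      by_cases h0 : w = 0
      · subst h0
        obtain ⟨ε, hε, hball⟩ := Metric.isOpen_iff.1 hCopen 0 hw
        refine ⟨(fun _ => (1:ℝ)), ?_, ?_⟩
        · have hone : (fun _ => (1:ℝ) : Fin d → ℝ) = ((2/ε) : ℝ) • (fun _ => ε/2 : Fin d → ℝ) := by
            funext i
            simp only [Pi.smul_apply, smul_eq_mul]
            field_simp
          rw [hone]
          apply hcone _ (by positivity)
          apply hball
          rw [Metric.mem_ball, dist_pi_lt_iff hε]
          intro i
          rw [Real.dist_eq]
          simp only [Pi.zero_apply, sub_zero]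
          rw [abs_of_pos (by positivity)]
          linarith
        · intro h
          have := congrFun h ⟨0, Nat.pos_of_ne_zero hd⟩
          simp at this
      · exact ⟨w, hw, h0⟩
    obtain ⟨w', hw'C, hw'0⟩ := hw'
    obtain ⟨ε, hε, hball⟩ := Metric.isOpen_iff.1 hCopen w' hw'C
    obtain ⟨i, hi⟩ := Function.ne_iff.1 hw'0
    simp only [Pi.zero_apply] at hi
    have h0cl : (0 : Fin d → ℝ) ∈ closure C := aux_zero_mem_closure C hcone ⟨w', hw'C⟩
    set t₁ : ℝ := ε⁻¹ with ht₁
    set t₂ : ℝ := ε⁻¹ + 2/|w' i| with ht₂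
    have hm1 := aux_round_mem C hCconv hcone w' hw'C ε hε hball 0 h0cl t₁ le_rfl
    have hm2 := aux_round_mem C hCconv hcone w' hw'C ε hε hball 0 h0cl t₂
      (le_add_of_nonneg_right (by positivity))
    refine ⟨_, _, (hEmem _).2 hm1, (hEmem _).2 hm2, ?_⟩
    intro heq
    have hci := congrFun heq i
    simp only [Pi.zero_apply, zero_add] at hci
    have hr1 := abs_sub_round (t₁ * w' i)
    have hr2 := abs_sub_round (t₂ * w' i)
    have habs : |t₂ * w' i - t₁ * w' i| = 2 := by
      have he : t₂ * w' i - t₁ * w' i = (2/|w' i|) * w' i := by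
        rw [ht₂, ht₁]; ring
      rw [he, abs_mul, abs_div]
      rw [abs_abs, abs_two, div_mul_cancel₀]
      exact abs_ne_zero.2 hi
    rw [hci] at hr1
    have := abs_sub_abs_le_abs_sub (t₂ * w' i - (round (t₂ * w' i) : ℝ))
      (t₁ * w' i - (round (t₂ * w' i) : ℝ))
    have h3 : |t₂ * w' i - t₁ * w' i| ≤ 1 := by
      calc |t₂ * w' i - t₁ * w' i|
          = |(t₂ * w' i - (round (t₂ * w' i) : ℝ)) - (t₁ * w' i - (round (t₂ * w' i) : ℝ))| := by
            congr 1; ring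
        _ ≤ |t₂ * w' i - (round (t₂ * w' i) : ℝ)| + |t₁ * w' i - (round (t₂ * w' i) : ℝ)| :=
            abs_sub _ _
        _ ≤ 1/2 + 1/2 := add_le_add hr2 hr1
        _ = 1 := by norm_num
    rw [habs] at h3
    norm_num at h3
  have hδ1 : δ ≤ 1 := by
    obtain ⟨x₀, y₀, hx₀, hy₀, hne⟩ := hiE
    obtain ⟨m, f, hf0, hfm, _, hfE, hfS⟩ := hcomm x₀ hx₀ y₀ hy₀ hne
    have hm : m ≠ 0 := by
      rintro rfl
      exact hne (hf0 ▸ hfm ▸ rfl)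
    have hz : f 1 - f 0 ∈ S := hfS 0 (Nat.pos_of_ne_zero hm)
    calc δ ≤ μ (f 1 - f 0) := hδ _ hz
      _ ≤ ∑' z, μ z := ENNReal.le_tsum _
      _ = 1 := hμ
  have hδtop : δ ≠ ⊤ := (lt_of_le_of_lt hδ1 ENNReal.one_lt_top).ne
  have hρpos : 0 < δ.toReal := ENNReal.toReal_pos hδpos.ne' hδtop
  have hρ1 : δ.toReal ≤ 1 := by
    have := ENNReal.toReal_mono ENNReal.one_ne_top hδ1
    simpa using this
  have hlogρ : Real.log δ.toReal ≤ 0 := Real.log_nonpos hρpos.le hρ1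
  -- green positivity
  have hgreen_pos : ∀ x ∈ E, ∀ y ∈ E, green p x y ≠ 0 := by
    intro x hx y hy
    obtain ⟨m, _, hk⟩ := hkiter x hx y hy
    have h1 : δ ^ m ≠ 0 := pow_ne_zero m hδpos.ne'
    intro h0
    apply h1
    have : δ ^ m ≤ green p x y := hk.trans (ENNReal.le_tsum m)
    rw [h0] at this
    exact le_antisymm this zero_le
  have hgreen_ge : ∀ x ∈ E, ∀ y ∈ E, ∃ m : ℕ, δ ^ m ≤ green p x y ∧
      (m : ℝ) ≤ κ * rnorm (toR y - toR x) := by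
    intro x hx y hy
    obtain ⟨m, hm, hk⟩ := hkiter x hx y hy
    exact ⟨m, hk.trans (ENNReal.le_tsum m), hm⟩
  -- chain comparison at ℝ≥0∞ level
  have hchain : ∀ x ∈ E, ∀ y ∈ E, ∀ x' ∈ E, ∀ y' ∈ E,
      ∃ m₁ m₂ : ℕ, (m₁ : ℝ) ≤ κ * rnorm (toR x - toR x') ∧
        (m₂ : ℝ) ≤ κ * rnorm (toR y' - toR y) ∧
        δ ^ (m₁ + m₂) * green p x y ≤ green p x' y' := by
    intro x hx y hy x' hx' y' hy'
    obtain ⟨m₁, hm₁, hk₁⟩ := hkiter x' hx' x hx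
    obtain ⟨m₂, hm₂, hk₂⟩ := hkiter y hy y' hy'
    refine ⟨m₁, m₂, hm₁, hm₂, ?_⟩
    calc δ ^ (m₁ + m₂) * green p x y = δ ^ m₁ * green p x y * δ ^ m₂ := by ring
      _ ≤ kiter p m₁ x' x * green p x y * kiter p m₂ y y' := by
          exact mul_le_mul' (mul_le_mul' hk₁ le_rfl) hk₂
      _ ≤ green p x' y' := aux_green_chain p m₁ m₂ x' x y y'
  -- finiteness transfer
  have hfin : ∀ x ∈ E, ∀ y ∈ E, ∀ x' ∈ E, ∀ y' ∈ E,
      green p x y = ⊤ → green p x' y' = ⊤ := by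
    intro x hx y hy x' hx' y' hy' h
    obtain ⟨m₁, m₂, _, _, hch⟩ := hchain x hx y hy x' hx' y' hy'
    rw [h, ENNReal.mul_top (pow_ne_zero _ hδpos.ne')] at hch
    exact top_le_iff.mp hch
  -- key log comparison
  have hlog : ∀ x ∈ E, ∀ y ∈ E, ∀ x' ∈ E, ∀ y' ∈ E,
      Real.log (green p x' y').toReal ≤ Real.log (green p x y).toReal
        + κ * |Real.log δ.toReal| * (rnorm (toR x' - toR x) + rnorm (toR y' - toR y)) := by
    intro x hx y hy x' hx' y' hy'
    have hrhs0 : 0 ≤ κ * |Real.log δ.toReal| * (rnorm (toR x' - toR x) + rnorm (toR y' - toR y)) :=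
      mul_nonneg (mul_nonneg hκ.le (abs_nonneg _))
        (add_nonneg (aux_rnorm_nonneg _) (aux_rnorm_nonneg _))
    by_cases htop : green p x y = ⊤
    · have h2 : green p x' y' = ⊤ := hfin x hx y hy x' hx' y' hy' htop
      rw [htop, h2]
      simpa using hrhs0
    · have htop' : green p x' y' ≠ ⊤ := fun h => htop (hfin x' hx' y' hy' x hx y hy h)
      obtain ⟨m₁, m₂, hm₁, hm₂, hch⟩ := hchain x' hx' y' hy' x hx y hy
      -- hm₁ : m₁ ≤ κ * rnorm (toR x' - toR x), hm₂ : m₂ ≤ κ * rnorm (toR y - toR y')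
      rw [aux_rnorm_sub_comm (toR y) (toR y')] at hm₂
      set A := (green p x y).toReal with hA
      set B := (green p x' y').toReal with hB
      have hBpos : 0 < B := ENNReal.toReal_pos (hgreen_pos x' hx' y' hy') htop'
      have hchR : δ.toReal ^ (m₁ + m₂) * B ≤ A := by
        have := ENNReal.toReal_mono htop hch
        rwa [ENNReal.toReal_mul, ENNReal.toReal_pow] at this
      have hlogle : Real.log (δ.toReal ^ (m₁ + m₂) * B) ≤ Real.log A :=
        Real.log_le_log (by positivity) hchR
      rw [Real.log_mul (by positivity) hBpos.ne', Real.log_pow] at hlogle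
      -- so : (m₁+m₂) * log ρ + log B ≤ log A
      have h1 : -(((m₁ : ℝ) + m₂) * Real.log δ.toReal)
          ≤ ((m₁ : ℝ) + m₂) * |Real.log δ.toReal| := by
        rw [← mul_neg]
        exact mul_le_mul_of_nonneg_left (neg_le_abs _) (by positivity)
      have h2 : ((m₁ : ℝ) + m₂) * |Real.log δ.toReal|
          ≤ κ * (rnorm (toR x' - toR x) + rnorm (toR y' - toR y)) * |Real.log δ.toReal| := by
        apply mul_le_mul_of_nonneg_right _ (abs_nonneg _)
        calc (m₁ : ℝ) + m₂ ≤ κ * rnorm (toR x' - toR x) + κ * rnorm (toR y' - toR y) :=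
              add_le_add hm₁ hm₂
          _ = κ * (rnorm (toR x' - toR x) + rnorm (toR y' - toR y)) := by ring
      push_cast at hlogle
      nlinarith [hlogle, h1, h2]
  -- uniform eventual lower bound along admissible sequences
  have hlower : ∀ (u v : Fin d → ℝ) (xn yn : ℕ → Fin d → ℤ),
      (∀ n, xn n ∈ E) → (∀ n, yn n ∈ E) →
      Tendsto (fun n : ℕ => (n : ℝ)⁻¹ • toR (xn n)) atTop (nhds u) →
      Tendsto (fun n : ℕ => (n : ℝ)⁻¹ • toR (yn n)) atTop (nhds v) →
      ∀ᶠ n : ℕ in atTop, κ * Real.log δ.toReal * (rnorm (v - u) + 1)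
        ≤ Real.log ((green p (xn n) (yn n)).toReal) / n := by
    intro u v xn yn hxE hyE hxT hyT
    have hDT : Tendsto (fun n : ℕ => rnorm ((n : ℝ)⁻¹ • toR (yn n) - (n : ℝ)⁻¹ • toR (xn n)))
        atTop (nhds (rnorm (v - u))) :=
      (aux_rnorm_continuous.tendsto _).comp (hyT.sub hxT)
    have hev : ∀ᶠ n : ℕ in atTop,
        rnorm ((n : ℝ)⁻¹ • toR (yn n) - (n : ℝ)⁻¹ • toR (xn n)) < rnorm (v - u) + 1 :=
      hDT.eventually (gt_mem_nhds (lt_add_one _))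
    filter_upwards [hev, eventually_ge_atTop 1] with n hevn hn1
    have hnpos : (0 : ℝ) < n := by exact_mod_cast hn1
    by_cases htop : green p (xn n) (yn n) = ⊤
    · rw [htop]
      simp only [ENNReal.toReal_top, Real.log_zero, zero_div]
      have : κ * Real.log δ.toReal * (rnorm (v - u) + 1) ≤ 0 := by
        apply mul_nonpos_of_nonpos_of_nonneg
        · exact mul_nonpos_of_nonneg_of_nonpos hκ.le hlogρ
        · linarith [aux_rnorm_nonneg (v - u)]
      linarith [aux_rnorm_nonneg (v - u), this]
    · obtain ⟨m, hge, hm⟩ := hgreen_ge (xn n) (hxE n) (yn n) (hyE n)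
      have hA : δ.toReal ^ m ≤ (green p (xn n) (yn n)).toReal := by
        have := ENNReal.toReal_mono htop hge
        rwa [ENNReal.toReal_pow] at this
      have hlg : (m : ℝ) * Real.log δ.toReal ≤ Real.log ((green p (xn n) (yn n)).toReal) := by
        have := Real.log_le_log (by positivity) hA
        rwa [Real.log_pow] at this
      have hmlog : κ * rnorm (toR (yn n) - toR (xn n)) * Real.log δ.toReal
          ≤ (m : ℝ) * Real.log δ.toReal :=
        mul_le_mul_of_nonpos_right hm hlogρ
      have hsm : rnorm ((n : ℝ)⁻¹ • toR (yn n) - (n : ℝ)⁻¹ • toR (xn n))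
          = (n : ℝ)⁻¹ * rnorm (toR (yn n) - toR (xn n)) := by
        rw [← smul_sub, aux_rnorm_smul, abs_of_pos (inv_pos.2 hnpos)]
      have hstep2 : κ * Real.log δ.toReal * (rnorm (v - u) + 1)
          ≤ κ * Real.log δ.toReal * rnorm ((n : ℝ)⁻¹ • toR (yn n) - (n : ℝ)⁻¹ • toR (xn n)) := by
        apply mul_le_mul_of_nonpos_left _ (mul_nonpos_of_nonneg_of_nonpos hκ.le hlogρ)
        exact hevn.le
      rw [hsm] at hstep2
      rw [le_div_iff₀ hnpos]
      calc κ * Real.log δ.toReal * (rnorm (v - u) + 1) * n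
          ≤ κ * Real.log δ.toReal * ((n : ℝ)⁻¹ * rnorm (toR (yn n) - toR (xn n))) * n :=
            mul_le_mul_of_nonneg_right hstep2 hnpos.le
        _ = κ * rnorm (toR (yn n) - toR (xn n)) * Real.log δ.toReal := by
            field_simp
        _ ≤ (m : ℝ) * Real.log δ.toReal := hmlog
        _ ≤ Real.log ((green p (xn n) (yn n)).toReal) := hlg
  -- lower bound constant is nonpositive
  have hbneg : ∀ u v : Fin d → ℝ, κ * Real.log δ.toReal * (rnorm (v - u) + 1) ≤ 0 := by
    intro u v
    apply mul_nonpos_of_nonpos_of_nonneg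
    · exact mul_nonpos_of_nonneg_of_nonpos hκ.le hlogρ
    · linarith [aux_rnorm_nonneg (v - u)]
  -- Goal 1
  have goal1 : ∀ u ∈ closure C, ∀ v ∈ closure C,
      (Jset p E u v).Nonempty ∧ BddBelow (Jset p E u v) := by
    intro u hu v hv
    obtain ⟨a, haC, haT⟩ := aux_approxE C hCopen hCconv hcone hCne u hu
    obtain ⟨b, hbC, hbT⟩ := aux_approxE C hCopen hCconv hcone hCne v hv
    constructor
    · exact ⟨_, a, b, fun n => (hEmem _).2 (haC n), fun n => (hEmem _).2 (hbC n),
        haT, hbT, rfl⟩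
    · refine ⟨κ * Real.log δ.toReal * (rnorm (v - u) + 1), ?_⟩
      rintro r ⟨xn, yn, hxE, hyE, hxT, hyT, rfl⟩
      exact aux_le_liminf _ (hbneg u v) _ (hlower u v xn yn hxE hyE hxT hyT)
  refine ⟨goal1, ?_⟩
  -- one-sided Lipschitz estimate
  have main : ∀ u ∈ closure C, ∀ v ∈ closure C, ∀ u' ∈ closure C, ∀ v' ∈ closure C,
      Jfun p E u' v' ≤ Jfun p E u v
        + κ * |Real.log δ.toReal| * (rnorm (u' - u) + rnorm (v' - v)) := by
    intro u hu v hv u' hu' v' hv'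
    have hc0 : 0 ≤ κ * |Real.log δ.toReal| * (rnorm (u' - u) + rnorm (v' - v)) :=
      mul_nonneg (mul_nonneg hκ.le (abs_nonneg _))
        (add_nonneg (aux_rnorm_nonneg _) (aux_rnorm_nonneg _))
    obtain ⟨ne1, bb1⟩ := goal1 u hu v hv
    obtain ⟨ne2, bb2⟩ := goal1 u' hu' v' hv'
    rw [← sub_le_iff_le_add']
    rw [sub_le_iff_le_add']
    refine le_of_forall_pos_le_add ?_
    intro ε hε
    obtain ⟨r, hrmem, hrlt⟩ := Real.lt_sInf_add_pos ne1 hε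
    obtain ⟨xn, yn, hxE', hyE', hxT, hyT, hr⟩ := hrmem
    obtain ⟨an, haC, haT⟩ := aux_approxE C hCopen hCconv hcone hCne u' hu'
    obtain ⟨bn, hbC, hbT⟩ := aux_approxE C hCopen hCconv hcone hCne v' hv'
    have haE : ∀ n, an n ∈ E := fun n => (hEmem _).2 (haC n)
    have hbE : ∀ n, bn n ∈ E := fun n => (hEmem _).2 (hbC n)
    have hmemJ : Filter.liminf
        (fun n => Real.log ((green p (an n) (bn n)).toReal) / n) atTop ∈ Jset p E u' v' :=
      ⟨an, bn, haE, hbE, haT, hbT, rfl⟩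
    set f := fun n : ℕ => Real.log ((green p (an n) (bn n)).toReal) / n with hf
    set g := fun n : ℕ => Real.log ((green p (xn n) (yn n)).toReal) / n with hg
    -- pointwise comparison
    have hh : ∀ n : ℕ, 1 ≤ n → |f n - g n| ≤ κ * |Real.log δ.toReal| *
        (rnorm ((n : ℝ)⁻¹ • toR (an n) - (n : ℝ)⁻¹ • toR (xn n))
          + rnorm ((n : ℝ)⁻¹ • toR (bn n) - (n : ℝ)⁻¹ • toR (yn n))) := by
      intro n hn
      have hnpos : (0 : ℝ) < n := by exact_mod_cast hn
      have h1 := hlog (xn n) (hxE' n) (yn n) (hyE' n) (an n) (haE n) (bn n) (hbE n)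
      have h2 := hlog (an n) (haE n) (bn n) (hbE n) (xn n) (hxE' n) (yn n) (hyE' n)
      rw [aux_rnorm_sub_comm (toR (xn n)) (toR (an n)),
        aux_rnorm_sub_comm (toR (yn n)) (toR (bn n))] at h2
      set R₁ := rnorm (toR (an n) - toR (xn n)) with hR₁
      set R₂ := rnorm (toR (bn n) - toR (yn n)) with hR₂
      have habs : |Real.log ((green p (an n) (bn n)).toReal)
          - Real.log ((green p (xn n) (yn n)).toReal)|
          ≤ κ * |Real.log δ.toReal| * (R₁ + R₂) :=
        abs_sub_le_iff.2 ⟨by linarith, by linarith⟩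
      have e1 : rnorm ((n : ℝ)⁻¹ • toR (an n) - (n : ℝ)⁻¹ • toR (xn n)) = (n : ℝ)⁻¹ * R₁ := by
        rw [← smul_sub, aux_rnorm_smul, abs_of_pos (inv_pos.2 hnpos), hR₁]
      have e2 : rnorm ((n : ℝ)⁻¹ • toR (bn n) - (n : ℝ)⁻¹ • toR (yn n)) = (n : ℝ)⁻¹ * R₂ := by
        rw [← smul_sub, aux_rnorm_smul, abs_of_pos (inv_pos.2 hnpos), hR₂]
      rw [e1, e2]
      have e3 : f n - g n = (Real.log ((green p (an n) (bn n)).toReal)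
          - Real.log ((green p (xn n) (yn n)).toReal)) / n := by
        rw [hf, hg]
        ring
      rw [e3, abs_div, abs_of_pos hnpos]
      rw [div_le_iff₀ hnpos]
      calc |Real.log ((green p (an n) (bn n)).toReal)
          - Real.log ((green p (xn n) (yn n)).toReal)|
          ≤ κ * |Real.log δ.toReal| * (R₁ + R₂) := habs
        _ = κ * |Real.log δ.toReal| * ((n : ℝ)⁻¹ * R₁ + (n : ℝ)⁻¹ * R₂) * n := by
            field_simp
    -- the comparison sequence tends to c
    have hhT : Tendsto (fun n : ℕ => κ * |Real.log δ.toReal| *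
        (rnorm ((n : ℝ)⁻¹ • toR (an n) - (n : ℝ)⁻¹ • toR (xn n))
          + rnorm ((n : ℝ)⁻¹ • toR (bn n) - (n : ℝ)⁻¹ • toR (yn n)))) atTop
        (nhds (κ * |Real.log δ.toReal| * (rnorm (u' - u) + rnorm (v' - v)))) := by
      apply Tendsto.const_mul
      exact ((aux_rnorm_continuous.tendsto _).comp (haT.sub hxT)).add
        ((aux_rnorm_continuous.tendsto _).comp (hbT.sub hyT))
    have hkey : liminf f atTop ≤ liminf g atTop
        + κ * |Real.log δ.toReal| * (rnorm (u' - u) + rnorm (v' - v)) := by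
      apply aux_liminf_le f g _ hc0
      · intro ε' hε'
        filter_upwards [eventually_ge_atTop 1,
          hhT.eventually (gt_mem_nhds (lt_add_of_pos_right _ hε'))] with n h1 h2
        have h3 := hh n h1
        have h4 := abs_le.1 h3
        linarith
      · intro ε' hε'
        filter_upwards [eventually_ge_atTop 1,
          hhT.eventually (gt_mem_nhds (lt_add_of_pos_right _ hε'))] with n h1 h2
        have h3 := hh n h1
        have h4 := abs_le.1 h3
        linarith
      · exact ⟨κ * Real.log δ.toReal * (rnorm (v' - u') + 1), hbneg u' v',
          hlower u' v' an bn haE hbE haT hbT⟩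
    calc Jfun p E u' v' ≤ liminf f atTop := csInf_le bb2 hmemJ
      _ ≤ liminf g atTop
          + κ * |Real.log δ.toReal| * (rnorm (u' - u) + rnorm (v' - v)) := hkey
      _ = r + κ * |Real.log δ.toReal| * (rnorm (u' - u) + rnorm (v' - v)) := by rw [← hr]
      _ ≤ (Jfun p E u v + ε)
          + κ * |Real.log δ.toReal| * (rnorm (u' - u) + rnorm (v' - v)) := by
          have : r ≤ Jfun p E u v + ε := hrlt.le
          linarith
      _ = Jfun p E u v + κ * |Real.log δ.toReal| * (rnorm (u' - u) + rnorm (v' - v)) + ε := by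
          ring
  -- conclude
  intro u hu v hv u' hu' v' hv'
  rw [abs_sub_le_iff]
  constructor
  · have := main u hu v hv u' hu' v' hv'
    linarith
  · have h := main u' hu' v' hv' u hu v hv
    rw [aux_rnorm_sub_comm u u', aux_rnorm_sub_comm v v'] at h
    linarith
end
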